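/- Let n, d, k be positive real numbers. Then 1 − k/(k+d) > d/(n+d) − (k/(k+d))·(d/(n+d))³ holds if and only if k < (n+d)²/(n+2d); equivalently, writing α = n/d and γ = k/d, the inequality holds if and only if γ < (α+1)²/(α+2). (This characterizes exactly when the post-test-time-training loss starting from the pre-trained initialization, (d/(n+d) − (k/(k+d))(d/(n+d))³)·‖β‖², is smaller than the post-test-time-training loss starting from the zero initialization, (1 − k/(k+d))·‖β‖².) -/

import Mathlib

/-- phase transition between pre-trained and zero initialization
(isotropic, noiseless setting). -/
theorem stmt11 (n d k : ℝ) (hn : 0 < n) (hd : 0 < d) (hk : 0 < k) :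
    ((1 - k / (k + d) > d / (n + d) - (k / (k + d)) * (d / (n + d)) ^ 3) ↔
        k < (n + d) ^ 2 / (n + 2 * d)) ∧
    ((1 - k / (k + d) > d / (n + d) - (k / (k + d)) * (d / (n + d)) ^ 3) ↔
        k / d < (n / d + 1) ^ 2 / (n / d + 2)) := by
  have hkd : (0:ℝ) < k + d := by linarith
  have hnd : (0:ℝ) < n + d := by linarith
  have hn2d : (0:ℝ) < n + 2 * d := by linarith
  have key : (1 - k / (k + d) > d / (n + d) - (k / (k + d)) * (d / (n + d)) ^ 3) ↔
      k * (n + 2 * d) < (n + d) ^ 2 := by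
    rw [gt_iff_lt, ← sub_pos]
    have heq : (1 - k / (k + d)) - (d / (n + d) - (k / (k + d)) * (d / (n + d)) ^ 3)
        = d * n * ((n + d) ^ 2 - k * (n + 2 * d)) / ((k + d) * (n + d) ^ 3) := by
      field_simp
      ring
    rw [heq]
    constructor
    · intro h
      by_contra hc
      push_neg at hc
      have : d * n * ((n + d) ^ 2 - k * (n + 2 * d)) ≤ 0 := by
        nlinarith [mul_nonneg (mul_pos hd hn).le (show (0:ℝ) ≤ k * (n + 2 * d) - (n + d) ^ 2 by linarith)]
      have hden : (0:ℝ) < (k + d) * (n + d) ^ 3 := by positivity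
      nlinarith [div_nonpos_of_nonpos_of_nonneg this hden.le]
    · intro h
      have : (0:ℝ) < d * n * ((n + d) ^ 2 - k * (n + 2 * d)) :=
        mul_pos (mul_pos hd hn) (by linarith)
      positivity
  constructor
  · rw [key, lt_div_iff₀ hn2d]
  · rw [key, div_lt_div_iff₀ hd (by positivity : (0:ℝ) < n / d + 2)]
    rw [show k * (n / d + 2) = k * (n + 2 * d) / d by field_simp,
        show (n / d + 1) ^ 2 * d = (n + d) ^ 2 / d by field_simp,
        div_lt_div_iff_of_pos_right hd]
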